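/- Let r, c, ρ, v, f_1,…,f_m, g, W, Z and μ = Z^{-1} e^{-W} ρ^{⊗m} be as in the context. Let a_j = ∫_{ℝ^d} f_j(x) g(x) dx ≥ 0, and let μ_lin be the probability measure on ℝ^m with density proportional to η ↦ exp(b ∑_{j=1}^m η_j a_j) with respect to ρ^{⊗m} (the lattice Gibbs measure obtained by replacing the energy density v(φ) by the linear function −bφ; its normalization constant is finite by the compact support of r). Then for every bounded measurable F : ℝ^m → ℝ that is monotonically increasing with respect to the coordinatewise order, ∫ F dμ ≤ ∫ F dμ_lin; i.e., the interacting lattice ensemble is dominated by the ensemble with linear energy density. -/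

import Mathlib

open MeasureTheory

/-- Convolution of two measures on `ℝ` (law of the sum of independent variables). -/
noncomputable def mconv (μ ν : Measure ℝ) : Measure ℝ :=
  (μ.prod ν).map (fun p => p.1 + p.2)

/-- `n`-fold convolution power of a measure on `ℝ`, with `r^{*0} = δ₀`. -/
noncomputable def convPow (r : Measure ℝ) : ℕ → Measure ℝ
  | 0 => Measure.dirac 0
  | n + 1 => mconv (convPow r n) r

/-- The compound Poisson measure `ρ_{c,r} = e^{-c} ∑_{n} (c^n / n!) r^{*n}`. -/
noncomputable def cPoisson (c : ℝ) (r : Measure ℝ) : Measure ℝ :=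
  Measure.sum (fun n : ℕ =>
    ENNReal.ofReal (Real.exp (-c) * c ^ n / n.factorial) • convPow r n)


lemma bddInt {α : Type*} [MeasurableSpace α] (μ : Measure α) [IsFiniteMeasure μ]
    {u : α → ℝ} {M : ℝ} (hu : Measurable u) (hb : ∀ x, |u x| ≤ M) : Integrable u μ :=
  ⟨hu.aestronglyMeasurable, HasFiniteIntegral.of_bounded (C := M)
    (Filter.Eventually.of_forall (by simpa [Real.norm_eq_abs] using hb))⟩

lemma cheb1 (ρ : Measure ℝ) [IsProbabilityMeasure ρ] {F K : ℝ → ℝ} {M : ℝ}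
    (hFm : Measurable F) (hKm : Measurable K)
    (hFb : ∀ x, |F x| ≤ M) (hKb : ∀ x, |K x| ≤ M)
    (hF : Monotone F) (hK : Antitone K) :
    ∫ x, F x * K x ∂ρ ≤ (∫ x, F x ∂ρ) * ∫ x, K x ∂ρ := by
  have hM : 0 ≤ M := le_trans (abs_nonneg _) (hFb 0)
  have iF : Integrable F ρ := bddInt ρ hFm hFb
  have iK : Integrable K ρ := bddInt ρ hKm hKb
  have iFK : Integrable (fun x => F x * K x) ρ := by
    refine bddInt ρ (hFm.mul hKm) (M := M * M) (fun x => ?_)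
    rw [abs_mul]
    exact mul_le_mul (hFb x) (hKb x) (abs_nonneg _) hM
  set IF := ∫ x, F x ∂ρ
  set IK := ∫ x, K x ∂ρ
  set IFK := ∫ x, F x * K x ∂ρ
  have key : ∀ x, ∫ y, (F x - F y) * (K x - K y) ∂ρ
      = F x * K x - F x * IK - IF * K x + IFK := by
    intro x
    have : (fun y => (F x - F y) * (K x - K y))
        = fun y => (F x * K x - F x * K y - F y * K x) + F y * K y := by
      funext y; ring
    have i1 : Integrable (fun y => F x * K x - F x * K y) ρ :=
      (integrable_const _).sub (iK.const_mul _)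
    have i2 : Integrable (fun y => F x * K x - F x * K y - F y * K x) ρ :=
      i1.sub (iF.mul_const _)
    rw [this, integral_add i2 iFK, integral_sub i1 (iF.mul_const _),
      integral_sub (integrable_const _) (iK.const_mul _),
      integral_const, integral_const_mul, integral_mul_const]
    simp [measure_univ, IF, IK, IFK]
  have hpt : ∀ x, F x * K x - F x * IK - IF * K x + IFK ≤ 0 := by
    intro x
    rw [← key x]
    refine integral_nonpos (fun y => ?_)
    rcases le_total x y with h | h
    · exact mul_nonpos_of_nonpos_of_nonneg (by simp [hF h]) (by simp [hK h])
    · exact mul_nonpos_of_nonneg_of_nonpos (by simp [hF h]) (by simp [hK h])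
  have hout : ∫ x, (F x * K x - F x * IK - IF * K x + IFK) ∂ρ ≤ 0 := integral_nonpos hpt
  have hcalc : ∫ x, (F x * K x - F x * IK - IF * K x + IFK) ∂ρ
      = IFK - IF * IK - IF * IK + IFK := by
    have i1 : Integrable (fun x => F x * K x - F x * IK) ρ := iFK.sub (iF.mul_const _)
    have i2 : Integrable (fun x => F x * K x - F x * IK - IF * K x) ρ := i1.sub (iK.const_mul _)
    rw [integral_add i2 (integrable_const _), integral_sub i1 (iK.const_mul _),
      integral_sub iFK (iF.mul_const _), integral_const_mul, integral_mul_const, integral_const]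
    simp [measure_univ, IF, IK, IFK]
  rw [hcalc] at hout
  linarith

lemma insertNth_zero_le_insertNth_zero {n : ℕ} {x x' : ℝ} {ξ ξ' : Fin n → ℝ}
    (hx : x ≤ x') (hξ : ξ ≤ ξ') :
    Fin.insertNth (α := fun _ : Fin (n + 1) => ℝ) 0 x ξ
      ≤ Fin.insertNth (α := fun _ : Fin (n + 1) => ℝ) 0 x' ξ' := by
  intro j
  refine Fin.cases ?_ (fun k => ?_) j
  · simpa using hx
  · have h1 : (0 : Fin (n + 1)).succAbove k = k.succ := Fin.zero_succAbove k
    rw [← h1, Fin.insertNth_apply_succAbove, Fin.insertNth_apply_succAbove]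
    exact hξ k

lemma measurable_insertNth_zero {n : ℕ} (x : ℝ) :
    Measurable (fun ξ : Fin n → ℝ =>
      Fin.insertNth (α := fun _ : Fin (n + 1) => ℝ) 0 x ξ) := by
  refine measurable_pi_iff.2 (fun j => ?_)
  refine Fin.cases ?_ (fun k => ?_) j
  · simpa using measurable_const
  · have h1 : (0 : Fin (n + 1)).succAbove k = k.succ := Fin.zero_succAbove k
    simp only [← h1, Fin.insertNth_apply_succAbove]
    exact measurable_pi_apply k

lemma harris : ∀ (n : ℕ) (μs : Fin n → Measure ℝ)
    (_ : ∀ i, IsProbabilityMeasure (μs i)) (F K : (Fin n → ℝ) → ℝ) (M : ℝ),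
    Measurable F → Measurable K → (∀ x, |F x| ≤ M) → (∀ x, |K x| ≤ M) →
    Monotone F → Antitone K →
    ∫ x, F x * K x ∂Measure.pi μs
      ≤ (∫ x, F x ∂Measure.pi μs) * ∫ x, K x ∂Measure.pi μs := by
  intro n
  induction n with
  | zero =>
    intro μs hprob F K M hFm hKm hFb hKb hF hK
    haveI := hprob
    haveI : IsProbabilityMeasure (Measure.pi μs) := by infer_instance
    rw [integral_unique, integral_unique, integral_unique]
    simp [measure_univ]
  | succ n IH =>
    intro μs hprob F K M hFm hKm hFb hKb hF hK
    haveI := hprob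
    have hM : 0 ≤ M := le_trans (abs_nonneg _) (hFb 0)
    set ρ0 := μs 0 with hρ0
    set ν' := Measure.pi (fun j : Fin n => μs ((0 : Fin (n + 1)).succAbove j)) with hν'
    haveI : IsProbabilityMeasure ν' := by rw [hν']; infer_instance
    set e := MeasurableEquiv.piFinSuccAbove (fun _ : Fin (n + 1) => ℝ) 0 with he
    have mp := measurePreserving_piFinSuccAbove μs 0
    have esymm : ∀ p : ℝ × (Fin n → ℝ), e.symm p = Fin.insertNth 0 p.1 p.2 := fun p => rfl
    set ins : ℝ → (Fin n → ℝ) → (Fin (n + 1) → ℝ) := fun x ξ => Fin.insertNth 0 x ξ with hins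
    -- transfer of integrals
    have transfer : ∀ u : (Fin (n + 1) → ℝ) → ℝ,
        ∫ x, u x ∂Measure.pi μs = ∫ p, u (ins p.1 p.2) ∂(ρ0.prod ν') := by
      intro u
      rw [← (mp.symm e).integral_comp']
      rfl
    -- measurability of composed maps
    have hFe : Measurable (fun p : ℝ × (Fin n → ℝ) => F (ins p.1 p.2)) := by
      have : (fun p : ℝ × (Fin n → ℝ) => F (ins p.1 p.2)) = F ∘ e.symm := by
        funext p; rw [Function.comp_apply, esymm]
      rw [this]; exact hFm.comp e.symm.measurable
    have hKe : Measurable (fun p : ℝ × (Fin n → ℝ) => K (ins p.1 p.2)) := by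
      have : (fun p : ℝ × (Fin n → ℝ) => K (ins p.1 p.2)) = K ∘ e.symm := by
        funext p; rw [Function.comp_apply, esymm]
      rw [this]; exact hKm.comp e.symm.measurable
    set Fb : ℝ → ℝ := fun x => ∫ ξ, F (ins x ξ) ∂ν' with hFbar
    set Kb : ℝ → ℝ := fun x => ∫ ξ, K (ins x ξ) ∂ν' with hKbar
    have hFbm : Measurable Fb :=
      (StronglyMeasurable.integral_prod_right' (hFe.stronglyMeasurable)).measurable
    have hKbm : Measurable Kb :=
      (StronglyMeasurable.integral_prod_right' (hKe.stronglyMeasurable)).measurable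
    have hFbb : ∀ x, |Fb x| ≤ M := by
      intro x
      have := norm_integral_le_of_norm_le_const (μ := ν')
        (f := fun ξ => F (ins x ξ)) (C := M)
        (Filter.Eventually.of_forall (fun ξ => by simpa [Real.norm_eq_abs] using hFb _))
      simpa [Real.norm_eq_abs, measure_univ] using this
    have hKbb : ∀ x, |Kb x| ≤ M := by
      intro x
      have := norm_integral_le_of_norm_le_const (μ := ν')
        (f := fun ξ => K (ins x ξ)) (C := M)
        (Filter.Eventually.of_forall (fun ξ => by simpa [Real.norm_eq_abs] using hKb _))
      simpa [Real.norm_eq_abs, measure_univ] using this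
    have hFx : ∀ x : ℝ, Measurable (fun ξ : Fin n → ℝ => F (ins x ξ)) :=
      fun x => hFm.comp (measurable_insertNth_zero x)
    have hKx : ∀ x : ℝ, Measurable (fun ξ : Fin n → ℝ => K (ins x ξ)) :=
      fun x => hKm.comp (measurable_insertNth_zero x)
    have iFx : ∀ x : ℝ, Integrable (fun ξ => F (ins x ξ)) ν' :=
      fun x => bddInt ν' (hFx x) (fun ξ => hFb _)
    have iKx : ∀ x : ℝ, Integrable (fun ξ => K (ins x ξ)) ν' :=
      fun x => bddInt ν' (hKx x) (fun ξ => hKb _)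
    have hFbmono : Monotone Fb := by
      intro x x' hxx'
      exact integral_mono (iFx x) (iFx x')
        (fun ξ => hF (insertNth_zero_le_insertNth_zero hxx' le_rfl))
    have hKbanti : Antitone Kb := by
      intro x x' hxx'
      exact integral_mono (iKx x') (iKx x)
        (fun ξ => hK (insertNth_zero_le_insertNth_zero hxx' le_rfl))
    -- step (3): pointwise IH
    have hIH : ∀ x : ℝ, ∫ ξ, F (ins x ξ) * K (ins x ξ) ∂ν' ≤ Fb x * Kb x := by
      intro x
      exact IH (fun j => μs ((0 : Fin (n + 1)).succAbove j)) (fun j => hprob _)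
        (fun ξ => F (ins x ξ)) (fun ξ => K (ins x ξ)) M (hFx x) (hKx x)
        (fun ξ => hFb _) (fun ξ => hKb _)
        (fun ξ ξ' hξ => hF (insertNth_zero_le_insertNth_zero le_rfl hξ))
        (fun ξ ξ' hξ => hK (insertNth_zero_le_insertNth_zero le_rfl hξ))
    -- main computation
    have iFKprod : Integrable (fun p : ℝ × (Fin n → ℝ) => F (ins p.1 p.2) * K (ins p.1 p.2))
        (ρ0.prod ν') := by
      refine bddInt _ (hFe.mul hKe) (M := M * M) (fun p => ?_)
      rw [abs_mul]; exact mul_le_mul (hFb _) (hKb _) (abs_nonneg _) hM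
    have iFprod : Integrable (fun p : ℝ × (Fin n → ℝ) => F (ins p.1 p.2)) (ρ0.prod ν') :=
      bddInt _ hFe (fun p => hFb _)
    have iKprod : Integrable (fun p : ℝ × (Fin n → ℝ) => K (ins p.1 p.2)) (ρ0.prod ν') :=
      bddInt _ hKe (fun p => hKb _)
    have step1 : ∫ x, F x * K x ∂Measure.pi μs
        = ∫ x, (∫ ξ, F (ins x ξ) * K (ins x ξ) ∂ν') ∂ρ0 := by
      rw [transfer (fun x => F x * K x), integral_prod _ iFKprod]
    have innermeas : Measurable (fun x => ∫ ξ, F (ins x ξ) * K (ins x ξ) ∂ν') :=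
      (StronglyMeasurable.integral_prod_right' ((hFe.mul hKe).stronglyMeasurable)).measurable
    have innerbd : ∀ x, |∫ ξ, F (ins x ξ) * K (ins x ξ) ∂ν'| ≤ M * M := by
      intro x
      have := norm_integral_le_of_norm_le_const (μ := ν')
        (f := fun ξ => F (ins x ξ) * K (ins x ξ)) (C := M * M)
        (Filter.Eventually.of_forall (fun ξ => by
          rw [Real.norm_eq_abs, abs_mul]
          exact mul_le_mul (hFb _) (hKb _) (abs_nonneg _) hM))
      simpa [Real.norm_eq_abs, measure_univ] using this
    have step2 : ∫ x, (∫ ξ, F (ins x ξ) * K (ins x ξ) ∂ν') ∂ρ0 ≤ ∫ x, Fb x * Kb x ∂ρ0 := by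
      refine integral_mono (bddInt _ innermeas innerbd)
        (bddInt _ (hFbm.mul hKbm) (M := M * M) (fun x => ?_)) hIH
      rw [abs_mul]; exact mul_le_mul (hFbb _) (hKbb _) (abs_nonneg _) hM
    have step3 : ∫ x, Fb x * Kb x ∂ρ0 ≤ (∫ x, Fb x ∂ρ0) * ∫ x, Kb x ∂ρ0 :=
      cheb1 ρ0 hFbm hKbm hFbb hKbb hFbmono hKbanti
    have hFtot : ∫ x, Fb x ∂ρ0 = ∫ x, F x ∂Measure.pi μs := by
      rw [transfer F, integral_prod _ iFprod]
    have hKtot : ∫ x, Kb x ∂ρ0 = ∫ x, K x ∂Measure.pi μs := by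
      rw [transfer K, integral_prod _ iKprod]
    calc ∫ x, F x * K x ∂Measure.pi μs
        = ∫ x, (∫ ξ, F (ins x ξ) * K (ins x ξ) ∂ν') ∂ρ0 := step1
      _ ≤ ∫ x, Fb x * Kb x ∂ρ0 := step2
      _ ≤ (∫ x, Fb x ∂ρ0) * ∫ x, Kb x ∂ρ0 := step3
      _ = (∫ x, F x ∂Measure.pi μs) * ∫ x, K x ∂Measure.pi μs := by rw [hFtot, hKtot]


lemma lintegral_pi_prod : ∀ (n : ℕ) (μs : Fin n → Measure ℝ)
    (_ : ∀ i, SigmaFinite (μs i)) (φ : Fin n → ℝ → ENNReal)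
    (_ : ∀ i, Measurable (φ i)),
    ∫⁻ x, ∏ i, φ i (x i) ∂Measure.pi μs = ∏ i, ∫⁻ t, φ i t ∂(μs i) := by
  intro n
  induction n with
  | zero =>
    intro μs hsf φ hφ
    haveI := hsf
    simp [lintegral_const]
  | succ n IH =>
    intro μs hsf φ hφ
    haveI := hsf
    set e := MeasurableEquiv.piFinSuccAbove (fun _ : Fin (n + 1) => ℝ) 0 with he
    have mp := measurePreserving_piFinSuccAbove μs 0
    have hg : Measurable (fun x : Fin (n + 1) → ℝ => ∏ i, φ i (x i)) :=
      Finset.measurable_prod _ (fun i _ => (hφ i).comp (measurable_pi_apply i))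
    rw [← (mp.symm e).lintegral_comp hg]
    have hfact : ∀ p : ℝ × (Fin n → ℝ),
        (∏ i, φ i (e.symm p i)) = φ 0 p.1 * ∏ j : Fin n, φ (Fin.succ j) (p.2 j) := by
      intro p
      have h0 : e.symm p 0 = p.1 := rfl
      have hs : ∀ j : Fin n, e.symm p (Fin.succ j) = p.2 j := fun j => by
        show (Fin.insertNth 0 p.1 p.2 : Fin (n+1) → ℝ) j.succ = p.2 j
        rw [← Fin.zero_succAbove j, Fin.insertNth_apply_succAbove]
      rw [Fin.prod_univ_succ, h0]
      exact congrArg _ (Finset.prod_congr rfl fun j _ => by rw [hs j])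
    simp_rw [hfact]
    rw [lintegral_prod_mul (f := φ 0)
      (g := fun ξ : Fin n → ℝ => ∏ j : Fin n, φ (Fin.succ j) (ξ j)) ((hφ 0).aemeasurable)
      ((Finset.measurable_prod _ (fun j _ => (hφ j.succ).comp (measurable_pi_apply j))).aemeasurable),
      IH _ (fun j => inferInstance) _ (fun j => hφ j.succ), Fin.prod_univ_succ]
    rfl

lemma integral_pi_prod : ∀ (n : ℕ) (μs : Fin n → Measure ℝ)
    (_ : ∀ i, SigmaFinite (μs i)) (φ : Fin n → ℝ → ℝ),
    ∫ x, ∏ i, φ i (x i) ∂Measure.pi μs = ∏ i, ∫ t, φ i t ∂(μs i) := by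
  intro n
  induction n with
  | zero =>
    intro μs hsf φ
    haveI := hsf
    simp [Measure.real, Measure.pi_univ]
  | succ n IH =>
    intro μs hsf φ
    haveI := hsf
    set e := MeasurableEquiv.piFinSuccAbove (fun _ : Fin (n + 1) => ℝ) 0 with he
    have mp := measurePreserving_piFinSuccAbove μs 0
    rw [← (mp.symm e).integral_comp']
    have hfact : ∀ p : ℝ × (Fin n → ℝ),
        (∏ i, φ i (e.symm p i)) = φ 0 p.1 * ∏ j : Fin n, φ (Fin.succ j) (p.2 j) := by
      intro p
      have h0 : e.symm p 0 = p.1 := rfl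
      have hs : ∀ j : Fin n, e.symm p (Fin.succ j) = p.2 j := fun j => by
        show (Fin.insertNth 0 p.1 p.2 : Fin (n+1) → ℝ) j.succ = p.2 j
        rw [← Fin.zero_succAbove j, Fin.insertNth_apply_succAbove]
      rw [Fin.prod_univ_succ, h0]
      exact congrArg _ (Finset.prod_congr rfl fun j _ => by rw [hs j])
    simp_rw [hfact]
    rw [integral_prod_mul (f := φ 0)
      (g := fun ξ : Fin n → ℝ => ∏ j : Fin n, φ (Fin.succ j) (ξ j)),
      IH _ (fun j => inferInstance) (fun j => φ (Fin.succ j)), Fin.prod_univ_succ]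
    rfl

lemma convPow_prob (r : Measure ℝ) [IsProbabilityMeasure r] (n : ℕ) :
    IsProbabilityMeasure (convPow r n) := by
  induction n with
  | zero => rw [convPow]; infer_instance
  | succ n IH =>
    rw [convPow, mconv]
    haveI := IH
    exact Measure.isProbabilityMeasure_map ((measurable_fst.add measurable_snd).aemeasurable)

lemma cPoisson_prob {c : ℝ} (hc : 0 ≤ c) (r : Measure ℝ) [IsProbabilityMeasure r] :
    IsProbabilityMeasure (cPoisson c r) := by
  constructor
  rw [cPoisson, Measure.sum_apply _ MeasurableSet.univ]
  have : ∀ n : ℕ, (ENNReal.ofReal (Real.exp (-c) * c ^ n / n.factorial) • convPow r n)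
      Set.univ = ENNReal.ofReal (Real.exp (-c) * c ^ n / n.factorial) := by
    intro n
    haveI := convPow_prob r n
    simp [measure_univ]
  simp_rw [this]
  have hnn : ∀ n : ℕ, 0 ≤ Real.exp (-c) * c ^ n / n.factorial := by
    intro n; positivity
  have hsum : Summable (fun n : ℕ => Real.exp (-c) * c ^ n / n.factorial) := by
    have := (Real.summable_pow_div_factorial c).mul_left (Real.exp (-c))
    simpa [mul_div_assoc] using this
  rw [← ENNReal.ofReal_tsum_of_nonneg hnn hsum]
  have : (∑' n : ℕ, Real.exp (-c) * c ^ n / n.factorial) = 1 := by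
    simp_rw [mul_div_assoc]
    rw [tsum_mul_left]
    have hexp : (∑' n : ℕ, c ^ n / n.factorial) = Real.exp c := by
      rw [Real.exp_eq_exp_ℝ, NormedSpace.exp_eq_tsum_div]
    rw [hexp, ← Real.exp_add]
    simp
  rw [this, ENNReal.ofReal_one]

lemma convPow_supp (r : Measure ℝ) {C : ℝ} (hC : 0 < C) [IsProbabilityMeasure r]
    (hsupp : r (Set.Icc (-C) C)ᶜ = 0) (n : ℕ) :
    convPow r n (Set.Icc (-(n * C)) (n * C))ᶜ = 0 := by
  induction n with
  | zero =>
    rw [convPow]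
    rw [Measure.dirac_apply' _ (MeasurableSet.compl measurableSet_Icc)]
    have : (0 : ℝ) ∈ Set.Icc (-((0 : ℕ) * C)) ((0 : ℕ) * C) := by simp
    simp [Set.indicator_of_notMem, this]
  | succ n IH =>
    rw [convPow, mconv,
      Measure.map_apply (f := fun p : ℝ × ℝ => p.1 + p.2) (measurable_fst.add measurable_snd)
        (MeasurableSet.compl measurableSet_Icc)]
    set S := Set.Icc (-(((n : ℝ) + 1) * C)) (((n : ℝ) + 1) * C)
    have hsub : (fun p : ℝ × ℝ => p.1 + p.2) ⁻¹' (Set.Icc (-((n + 1 : ℕ) * C)) ((n + 1 : ℕ) * C))ᶜ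
        ⊆ ((Set.Icc (-(n * C)) (n * C))ᶜ ×ˢ Set.univ) ∪
          (Set.univ ×ˢ (Set.Icc (-C) C)ᶜ) := by
      intro p hp
      by_contra hcon
      simp only [Set.mem_union, Set.mem_prod, Set.mem_univ, and_true, true_and,
        Set.mem_compl_iff, not_or, not_not] at hcon
      obtain ⟨h1, h2⟩ := hcon
      apply hp
      simp only [Set.mem_preimage, Set.mem_compl_iff, not_not]
      constructor
      · push_cast
        nlinarith [h1.1, h2.1]
      · push_cast
        nlinarith [h1.2, h2.2]
    refine le_antisymm (le_trans (measure_mono hsub) ?_) zero_le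
    refine le_trans (measure_union_le _ _) ?_
    haveI := convPow_prob r n
    rw [Measure.prod_prod, Measure.prod_prod, IH, hsupp]
    simp

lemma cPoisson_moment {c : ℝ} (hc : 0 ≤ c) (r : Measure ℝ) [IsProbabilityMeasure r]
    {C : ℝ} (hC : 0 < C) (hsupp : r (Set.Icc (-C) C)ᶜ = 0) {s : ℝ} (hs : 0 ≤ s) :
    ∫⁻ t, ENNReal.ofReal (Real.exp (s * |t|)) ∂(cPoisson c r) < ⊤ := by
  rw [cPoisson, lintegral_sum_measure]
  have hbound : ∀ n : ℕ, ∫⁻ t, ENNReal.ofReal (Real.exp (s * |t|))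
      ∂(ENNReal.ofReal (Real.exp (-c) * c ^ n / n.factorial) • convPow r n)
      ≤ ENNReal.ofReal (Real.exp (-c) * c ^ n / n.factorial) *
        ENNReal.ofReal (Real.exp (s * (n * C))) := by
    intro n
    rw [lintegral_smul_measure]
    refine mul_le_mul_right ?_ _
    have hae : ∀ᵐ t ∂(convPow r n),
        ENNReal.ofReal (Real.exp (s * |t|)) ≤ ENNReal.ofReal (Real.exp (s * (n * C))) := by
      have hnull := convPow_supp r hC hsupp n
      rw [ae_iff]
      refine measure_mono_null ?_ hnull
      intro t ht
      simp only [Set.mem_setOf_eq, not_le] at ht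
      simp only [Set.mem_compl_iff, Set.mem_Icc, not_and_or, not_le]
      by_contra hcon
      push_neg at hcon
      have habs : |t| ≤ n * C := abs_le.2 ⟨hcon.1, hcon.2⟩
      exact absurd (ENNReal.ofReal_le_ofReal (Real.exp_le_exp.2
        (mul_le_mul_of_nonneg_left habs hs))) (not_le.2 ht)
    calc ∫⁻ t, ENNReal.ofReal (Real.exp (s * |t|)) ∂(convPow r n)
        ≤ ∫⁻ _, ENNReal.ofReal (Real.exp (s * (n * C))) ∂(convPow r n) :=
          lintegral_mono_ae hae
      _ = ENNReal.ofReal (Real.exp (s * (n * C))) := by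
          haveI := convPow_prob r n
          simp [measure_univ]
  refine lt_of_le_of_lt (ENNReal.tsum_le_tsum hbound) ?_
  have heq : ∀ n : ℕ, ENNReal.ofReal (Real.exp (-c) * c ^ n / n.factorial) *
      ENNReal.ofReal (Real.exp (s * (n * C)))
      = ENNReal.ofReal (Real.exp (-c) * (c * Real.exp (s * C)) ^ n / n.factorial) := by
    intro n
    rw [← ENNReal.ofReal_mul (by positivity)]
    congr 1
    rw [mul_pow, ← Real.exp_nat_mul]
    ring_nf
  simp_rw [heq]
  have hnn : ∀ n : ℕ, 0 ≤ Real.exp (-c) * (c * Real.exp (s * C)) ^ n / n.factorial := by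
    intro n; positivity
  have hsum : Summable (fun n : ℕ => Real.exp (-c) * (c * Real.exp (s * C)) ^ n / n.factorial) := by
    have := (Real.summable_pow_div_factorial (c * Real.exp (s * C))).mul_left (Real.exp (-c))
    simpa [mul_div_assoc] using this
  rw [← ENNReal.ofReal_tsum_of_nonneg hnn hsum]
  exact ENNReal.ofReal_lt_top

/-- finite lattice analog of the first inequality of
Proposition 4.2: the interacting lattice Gibbs measure `μ = Z⁻¹ e^{-W} ρ^{⊗m}`
is dominated, on bounded measurable coordinatewise increasing observables, by the
lattice measure `μ_lin` with linear energy density `-bφ`, i.e. with density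
proportional to `exp (b ∑_j η_j a_j)`, `a_j = ∫ f_j g dx`. -/
theorem lattice_gibbs_dominated_by_linear
    (d m : ℕ) (hm : 1 ≤ m) (C : ℝ) (hC : 0 < C)
    (r : Measure ℝ) [IsProbabilityMeasure r] (hsupp : r (Set.Icc (-C) C)ᶜ = 0)
    (c : ℝ) (hc : 0 < c)
    (v : ℝ → ℝ) (hv : ContDiff ℝ 2 v) (hv0 : v 0 = 0)
    (b : ℝ) (hb : 0 < b) (hv' : ∀ t, |deriv v t| ≤ b)
    (hv'' : ∀ t, deriv (deriv v) t ≤ 0)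
    (f : Fin m → (Fin d → ℝ) → ℝ) (hf0 : ∀ j x, 0 ≤ f j x)
    (hfc : ∀ j, Continuous (f j)) (hfs : ∀ j, HasCompactSupport (f j))
    (g : (Fin d → ℝ) → ℝ) (hg0 : ∀ x, 0 ≤ g x)
    (hgc : Continuous g) (hgs : HasCompactSupport g)
    (W : (Fin m → ℝ) → ℝ)
    (hW : ∀ η, W η = ∫ x, v (∑ j, η j * f j x) * g x)
    (a : Fin m → ℝ) (ha : ∀ j, a j = ∫ x, f j x * g x)
    (Z : ℝ)
    (hZ : Z = ∫ η, Real.exp (-W η) ∂(Measure.pi fun _ : Fin m => cPoisson c r))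
    (μ : Measure (Fin m → ℝ))
    (hμ : μ = (Measure.pi fun _ : Fin m => cPoisson c r).withDensity
      (fun η => ENNReal.ofReal (Real.exp (-W η) / Z)))
    (Zlin : ℝ)
    (hZlin : Zlin = ∫ η, Real.exp (b * ∑ j, η j * a j)
      ∂(Measure.pi fun _ : Fin m => cPoisson c r))
    (μlin : Measure (Fin m → ℝ))
    (hμlin : μlin = (Measure.pi fun _ : Fin m => cPoisson c r).withDensity
      (fun η => ENNReal.ofReal (Real.exp (b * ∑ j, η j * a j) / Zlin))) :
    ∀ F : (Fin m → ℝ) → ℝ, Measurable F → (∃ M, ∀ η, |F η| ≤ M) → Monotone F →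
      ∫ η, F η ∂μ ≤ ∫ η, F η ∂μlin := by
  intro F hFm hFbdd hFmono
  obtain ⟨M, hFb⟩ := hFbdd
  have hM : 0 ≤ M := le_trans (abs_nonneg _) (hFb 0)
  set ρ : Measure ℝ := cPoisson c r with hρ
  haveI hρprob : IsProbabilityMeasure ρ := cPoisson_prob hc.le r
  set ν : Measure (Fin m → ℝ) := Measure.pi fun _ : Fin m => cPoisson c r with hν
  haveI hνprob : IsProbabilityMeasure ν := by rw [hν]; infer_instance
  -- ==== facts about v ====
  have hvdiff : Differentiable ℝ v := hv.differentiable (by norm_num)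
  have hvlipW : LipschitzWith b.toNNReal v := by
    refine lipschitzWith_of_nnnorm_deriv_le hvdiff (fun x => ?_)
    rw [← NNReal.coe_le_coe, coe_nnnorm, Real.coe_toNNReal _ hb.le, Real.norm_eq_abs]
    exact hv' x
  have hvlip : ∀ s t : ℝ, |v s - v t| ≤ b * |s - t| := by
    intro s t
    have := hvlipW.dist_le_mul s t
    rwa [Real.dist_eq, Real.dist_eq, Real.coe_toNNReal _ hb.le] at this
  have hvabs : ∀ t : ℝ, |v t| ≤ b * |t| := by
    intro t; simpa [hv0] using hvlip t 0
  have humono : Monotone (fun t : ℝ => v t + b * t) := by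
    have hdiffu : Differentiable ℝ (fun t : ℝ => v t + b * t) := by
      refine hvdiff.add ?_
      exact (differentiable_id.const_mul b)
    refine monotone_of_deriv_nonneg hdiffu (fun x => ?_)
    have hbt : HasDerivAt (fun t : ℝ => b * t) b x := by
      simpa using (hasDerivAt_id x).const_mul b
    have hd : HasDerivAt (fun t : ℝ => v t + b * t) (deriv v x + b) x :=
      ((hvdiff x).hasDerivAt).add hbt
    rw [hd.deriv]
    have := (abs_le.1 (hv' x)).1
    linarith
  -- ==== integrability in x ====
  set φ : (Fin m → ℝ) → (Fin d → ℝ) → ℝ := fun η x => ∑ j, η j * f j x with hφ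
  have hφc : ∀ η, Continuous (φ η) :=
    fun η => continuous_finset_sum _ (fun j _ => continuous_const.mul (hfc j))
  have hIx : ∀ (u : ℝ → ℝ), Continuous u → ∀ η, Integrable (fun x => u (φ η x) * g x) := by
    intro u hu η
    exact ((hu.comp (hφc η)).mul hgc).integrable_of_hasCompactSupport (hgs.mul_left)
  have hIfg : ∀ j, Integrable (fun x => f j x * g x) :=
    fun j => ((hfc j).mul hgc).integrable_of_hasCompactSupport (hgs.mul_left)
  have ha0 : ∀ j, 0 ≤ a j := by
    intro j
    rw [ha j]
    exact integral_nonneg (fun x => mul_nonneg (hf0 j x) (hg0 x))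
  have hsumint : ∀ (w : Fin m → ℝ), ∫ x, (∑ j, w j * (f j x * g x)) = ∑ j, w j * a j := by
    intro w
    rw [integral_finset_sum _ (fun j _ => (hIfg j).const_mul (w j))]
    refine Finset.sum_congr rfl (fun j _ => ?_)
    rw [integral_const_mul, ha j]
  have hIsum : ∀ (w : Fin m → ℝ), Integrable (fun x => ∑ j, w j * (f j x * g x)) :=
    fun w => integrable_finset_sum _ (fun j _ => (hIfg j).const_mul (w j))
  -- ==== W bounds and continuity ====
  have hWb : ∀ η, |W η| ≤ ∑ j, (b * |η j|) * a j := by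
    intro η
    rw [hW η]
    calc |∫ x, v (φ η x) * g x| ≤ ∫ x, |v (φ η x) * g x| := by
          simpa only [Real.norm_eq_abs] using
            norm_integral_le_integral_norm (μ := volume) (fun x => v (φ η x) * g x)
      _ ≤ ∫ x, (∑ j, (b * |η j|) * (f j x * g x)) := by
          refine integral_mono ((hIx v hv.continuous η).abs) (hIsum _) (fun x => ?_)
          rw [abs_mul, abs_of_nonneg (hg0 x)]
          have h1 : |v (φ η x)| ≤ b * (∑ j, |η j| * f j x) := by
            refine le_trans (hvabs _) (mul_le_mul_of_nonneg_left ?_ hb.le)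
            refine le_trans (Finset.abs_sum_le_sum_abs _ _) ?_
            refine le_of_eq (Finset.sum_congr rfl (fun j _ => ?_))
            rw [abs_mul, abs_of_nonneg (hf0 j x)]
          calc |v (φ η x)| * g x ≤ (b * (∑ j, |η j| * f j x)) * g x :=
                mul_le_mul_of_nonneg_right h1 (hg0 x)
            _ = ∑ j, (b * |η j|) * (f j x * g x) := by
                rw [Finset.mul_sum, Finset.sum_mul]
                exact Finset.sum_congr rfl (fun j _ => by ring)
      _ = ∑ j, (b * |η j|) * a j := hsumint _
  have hWlip : ∀ η η' : Fin m → ℝ, |W η - W η'| ≤ (b * ∑ j, a j) * dist η η' := by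
    intro η η'
    have hdiff : W η - W η' = ∫ x, (v (φ η x) - v (φ η' x)) * g x := by
      rw [hW η, hW η', ← integral_sub (hIx v hv.continuous η) (hIx v hv.continuous η')]
      refine integral_congr_ae (Filter.Eventually.of_forall (fun x => ?_))
      ring
    rw [hdiff]
    calc |∫ x, (v (φ η x) - v (φ η' x)) * g x|
        ≤ ∫ x, |(v (φ η x) - v (φ η' x)) * g x| := by
          simpa only [Real.norm_eq_abs] using
            norm_integral_le_integral_norm (μ := volume) (fun x => (v (φ η x) - v (φ η' x)) * g x)
      _ ≤ ∫ x, (∑ j, (b * dist η η') * (f j x * g x)) := by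
          refine integral_mono ?_ (hIsum _) (fun x => ?_)
          · exact (((hIx v hv.continuous η).sub (hIx v hv.continuous η')).congr
              (Filter.Eventually.of_forall (fun x => by simp only [Pi.sub_apply]; ring))).abs
          rw [abs_mul, abs_of_nonneg (hg0 x)]
          have h1 : |v (φ η x) - v (φ η' x)| ≤ ∑ j, (b * dist η η') * f j x := by
            refine le_trans (hvlip _ _) ?_
            have h2 : |φ η x - φ η' x| ≤ ∑ j, dist η η' * f j x := by
              rw [hφ]
              simp only [← Finset.sum_sub_distrib]
              refine le_trans (Finset.abs_sum_le_sum_abs _ _) (Finset.sum_le_sum (fun j _ => ?_))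
              rw [← sub_mul, abs_mul, abs_of_nonneg (hf0 j x)]
              refine mul_le_mul_of_nonneg_right ?_ (hf0 j x)
              rw [← Real.dist_eq]
              exact dist_le_pi_dist η η' j
            calc b * |φ η x - φ η' x| ≤ b * (∑ j, dist η η' * f j x) :=
                  mul_le_mul_of_nonneg_left h2 hb.le
              _ = ∑ j, (b * dist η η') * f j x := by
                  rw [Finset.mul_sum]; exact Finset.sum_congr rfl (fun j _ => by ring)
          calc |v (φ η x) - v (φ η' x)| * g x ≤ (∑ j, (b * dist η η') * f j x) * g x :=
                mul_le_mul_of_nonneg_right h1 (hg0 x)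
            _ = ∑ j, (b * dist η η') * (f j x * g x) := by
                rw [Finset.sum_mul]; exact Finset.sum_congr rfl (fun j _ => by ring)
      _ = ∑ j, (b * dist η η') * a j := hsumint _
      _ = (b * ∑ j, a j) * dist η η' := by
          rw [Finset.mul_sum, Finset.sum_mul]
          exact Finset.sum_congr rfl (fun j _ => by ring)
  have hWcont : Continuous W := by
    have hnn : 0 ≤ b * ∑ j, a j := mul_nonneg hb.le (Finset.sum_nonneg (fun j _ => ha0 j))
    refine (LipschitzWith.of_dist_le_mul (K := (b * ∑ j, a j).toNNReal) (fun η η' => ?_)).continuous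
    rw [Real.dist_eq, Real.coe_toNNReal _ hnn]
    exact hWlip η η'
  have hWm : Measurable W := hWcont.measurable
  -- ==== G and its monotonicity ====
  set L : (Fin m → ℝ) → ℝ := fun η => b * ∑ j, η j * a j with hL
  have hLcont : Continuous L := by
    refine continuous_const.mul (continuous_finset_sum _ (fun j _ => ?_))
    exact (continuous_apply j).mul continuous_const
  set G : (Fin m → ℝ) → ℝ := fun η => W η + L η with hG
  have hGcont : Continuous G := hWcont.add hLcont
  have hGrepr : ∀ η, G η = ∫ x, (v (φ η x) + b * φ η x) * g x := by
    intro η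
    have hL2 : L η = ∫ x, (b * φ η x) * g x := by
      have : ∀ x : Fin d → ℝ, (b * φ η x) * g x = ∑ j, (b * η j) * (f j x * g x) := by
        intro x
        rw [hφ]
        simp only [Finset.mul_sum, Finset.sum_mul]
        exact Finset.sum_congr rfl (fun j _ => by ring)
      simp_rw [this]
      rw [hsumint (fun j => b * η j)]
      show b * (∑ j, η j * a j) = _
      rw [Finset.mul_sum]
      exact Finset.sum_congr rfl (fun j _ => by ring)
    have hbφint : Integrable (fun x => (b * φ η x) * g x) :=
      ((continuous_const.mul (hφc η)).mul hgc).integrable_of_hasCompactSupport (hgs.mul_left)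
    rw [hG]
    simp only []
    rw [hW η, hL2, ← integral_add (hIx v hv.continuous η) hbφint]
    exact integral_congr_ae (Filter.Eventually.of_forall (fun x => by ring))
  have hGmono : Monotone G := by
    intro η η' hηη'
    rw [hGrepr η, hGrepr η']
    have hint1 : Integrable (fun x => (v (φ η x) + b * φ η x) * g x) :=
      hIx (fun t => v t + b * t) (hv.continuous.add (continuous_const.mul continuous_id)) η
    have hint2 : Integrable (fun x => (v (φ η' x) + b * φ η' x) * g x) :=
      hIx (fun t => v t + b * t) (hv.continuous.add (continuous_const.mul continuous_id)) η'
    refine integral_mono hint1 hint2 (fun x => ?_)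
    have hφle : φ η x ≤ φ η' x := by
      refine Finset.sum_le_sum (fun j _ => ?_)
      exact mul_le_mul_of_nonneg_right (hηη' j) (hf0 j x)
    exact mul_le_mul_of_nonneg_right (humono hφle) (hg0 x)
  -- ==== integrable dominating product function over ν ====
  set Φ : (Fin m → ℝ) → ℝ := fun η => ∏ j, Real.exp ((b * a j) * |η j|) with hΦ
  have hΦm : Measurable Φ := by
    refine Finset.measurable_prod _ (fun j _ => ?_)
    exact (Real.continuous_exp.comp (continuous_const.mul
      (continuous_abs.comp (continuous_apply j)))).measurable
  have hWleΦ : ∀ η, Real.exp (-W η) ≤ Φ η := by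
    intro η
    show Real.exp (-W η) ≤ ∏ j, Real.exp ((b * a j) * |η j|)
    rw [← Real.exp_sum]
    refine Real.exp_le_exp.2 (le_trans (neg_le_abs _) (le_trans (hWb η) ?_))
    exact le_of_eq (Finset.sum_congr rfl (fun j _ => by ring))
  have hLleΦ : ∀ η, Real.exp (L η) ≤ Φ η := by
    intro η
    show Real.exp (L η) ≤ ∏ j, Real.exp ((b * a j) * |η j|)
    rw [← Real.exp_sum]
    refine Real.exp_le_exp.2 ?_
    show b * (∑ j, η j * a j) ≤ _
    rw [Finset.mul_sum]
    refine Finset.sum_le_sum (fun j _ => ?_)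
    calc b * (η j * a j) ≤ b * (|η j| * a j) :=
          mul_le_mul_of_nonneg_left
            (mul_le_mul_of_nonneg_right (le_abs_self _) (ha0 j)) hb.le
      _ = (b * a j) * |η j| := by ring
  have hΦint : Integrable Φ ν := by
    refine ⟨hΦm.aestronglyMeasurable, ?_⟩
    have hΦ0 : ∀ η, 0 ≤ Φ η := fun η => Finset.prod_nonneg (fun j _ => (Real.exp_pos _).le)
    rw [hasFiniteIntegral_iff_ofReal (Filter.Eventually.of_forall hΦ0)]
    have : ∀ η : Fin m → ℝ, ENNReal.ofReal (Φ η)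
        = ∏ j, ENNReal.ofReal (Real.exp ((b * a j) * |η j|)) := by
      intro η
      exact ENNReal.ofReal_prod_of_nonneg (fun j _ => (Real.exp_pos _).le)
    simp_rw [this]
    rw [hν, lintegral_pi_prod m (fun _ => cPoisson c r) (fun j => inferInstance)
      (fun j t => ENNReal.ofReal (Real.exp ((b * a j) * |t|))) (fun j =>
      (Real.continuous_exp.comp (continuous_const.mul continuous_abs)).measurable.ennreal_ofReal)]
    refine ENNReal.prod_lt_top (fun j _ => ?_)
    exact cPoisson_moment hc.le r hC hsupp (mul_nonneg hb.le (ha0 j))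
  have hWint : Integrable (fun η => Real.exp (-W η)) ν := by
    refine hΦint.mono' (Real.continuous_exp.comp hWcont.neg).aestronglyMeasurable ?_
    refine Filter.Eventually.of_forall (fun η => ?_)
    rw [Real.norm_eq_abs, abs_of_pos (Real.exp_pos _)]
    exact hWleΦ η
  have hLint : Integrable (fun η => Real.exp (L η)) ν := by
    refine hΦint.mono' (Real.continuous_exp.comp hLcont).aestronglyMeasurable ?_
    refine Filter.Eventually.of_forall (fun η => ?_)
    rw [Real.norm_eq_abs, abs_of_pos (Real.exp_pos _)]
    exact hLleΦ η
  -- ==== positivity of Z and Zlin ====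
  have hZpos : 0 < Z := by
    rw [hZ]
    rw [(integral_pos_iff_support_of_nonneg_ae
      (Filter.Eventually.of_forall (fun η => (Real.exp_pos _).le)) hWint)]
    have : (Function.support fun η => Real.exp (-W η)) = Set.univ := by
      ext η; simp [(Real.exp_pos _).ne']
    rw [this]
    simp [measure_univ]
  have hZlinpos : 0 < Zlin := by
    rw [hZlin]
    rw [(integral_pos_iff_support_of_nonneg_ae
      (Filter.Eventually.of_forall (fun η => (Real.exp_pos _).le)) hLint)]
    have : (Function.support fun η : Fin m → ℝ => Real.exp (b * ∑ j, η j * a j)) = Set.univ := by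
      ext η; simp [(Real.exp_pos _).ne']
    rw [this]
    simp [measure_univ]
  -- ==== conversion of withDensity integrals ====
  have hconvI : ∀ (e : (Fin m → ℝ) → ℝ), Measurable e → (∀ η, 0 ≤ e η) →
      ∀ u : (Fin m → ℝ) → ℝ,
      ∫ η, u η ∂(ν.withDensity (fun η => ENNReal.ofReal (e η))) = ∫ η, e η * u η ∂ν := by
    intro e he he0 u
    rw [show (fun η => ENNReal.ofReal (e η))
        = (fun η => ((Real.toNNReal (e η) : NNReal) : ENNReal)) from rfl,
      integral_withDensity_eq_integral_smul he.real_toNNReal u]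
    refine integral_congr_ae (Filter.Eventually.of_forall (fun η => ?_))
    simp [NNReal.smul_def, Real.coe_toNNReal _ (he0 η)]
  -- ==== 1D exponential integrability and product structure ====
  have hexpabs : ∀ j, Integrable (fun t => Real.exp ((b * a j) * |t|)) ρ := by
    intro j
    refine ⟨(Real.continuous_exp.comp (continuous_const.mul continuous_abs)).aestronglyMeasurable, ?_⟩
    rw [hasFiniteIntegral_iff_ofReal
      (Filter.Eventually.of_forall (fun t => (Real.exp_pos _).le))]
    exact cPoisson_moment hc.le r hC hsupp (mul_nonneg hb.le (ha0 j))
  have hexpint : ∀ j, Integrable (fun t => Real.exp ((b * a j) * t)) ρ := by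
    intro j
    refine (hexpabs j).mono'
      (Real.continuous_exp.comp (continuous_const.mul continuous_id)).aestronglyMeasurable
      (Filter.Eventually.of_forall (fun t => ?_))
    rw [Real.norm_eq_abs, abs_of_pos (Real.exp_pos _)]
    exact Real.exp_le_exp.2 (mul_le_mul_of_nonneg_left (le_abs_self t)
      (mul_nonneg hb.le (ha0 j)))
  set cj : Fin m → ℝ := fun j => ∫ t, Real.exp ((b * a j) * t) ∂ρ with hcj
  have hcjpos : ∀ j, 0 < cj j := by
    intro j
    rw [hcj]
    show 0 < ∫ t, Real.exp ((b * a j) * t) ∂ρ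
    rw [integral_pos_iff_support_of_nonneg_ae
      (Filter.Eventually.of_forall (fun t => (Real.exp_pos _).le)) (hexpint j)]
    have : (Function.support fun t : ℝ => Real.exp ((b * a j) * t)) = Set.univ := by
      ext t; simp [(Real.exp_pos _).ne']
    rw [this]
    simp [measure_univ]
  have hdenm : ∀ j, Measurable (fun t : ℝ => ENNReal.ofReal (Real.exp ((b * a j) * t) / cj j)) :=
    fun j => (((Real.continuous_exp.comp (continuous_const.mul continuous_id)).measurable).div_const
      _).ennreal_ofReal
  set lam : Fin m → Measure ℝ := fun j =>
    ρ.withDensity (fun t => ENNReal.ofReal (Real.exp ((b * a j) * t) / cj j)) with hlam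
  have hlamprob : ∀ j, IsProbabilityMeasure (lam j) := by
    intro j
    constructor
    rw [hlam]
    show ρ.withDensity _ Set.univ = 1
    rw [withDensity_apply _ MeasurableSet.univ, Measure.restrict_univ]
    rw [← ofReal_integral_eq_lintegral_ofReal ((hexpint j).div_const _)
      (Filter.Eventually.of_forall (fun t => div_nonneg (Real.exp_pos _).le (hcjpos j).le))]
    rw [integral_div]
    rw [show (∫ t, Real.exp ((b * a j) * t) ∂ρ) = cj j from rfl]
    rw [div_self (hcjpos j).ne']
    exact ENNReal.ofReal_one
  haveI hlamsf : ∀ j, SigmaFinite (lam j) := by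
    intro j
    haveI := hlamprob j
    infer_instance
  have hexpprod : ∀ η : Fin m → ℝ,
      Real.exp (b * ∑ j, η j * a j) = ∏ j, Real.exp ((b * a j) * (η j)) := by
    intro η
    rw [← Real.exp_sum]
    congr 1
    rw [Finset.mul_sum]
    exact Finset.sum_congr rfl (fun j _ => by ring)
  have hZlinprod : Zlin = ∏ j, cj j := by
    rw [hZlin]
    simp_rw [hexpprod]
    rw [hν, integral_pi_prod m (fun _ => cPoisson c r) (fun j => inferInstance)
      (fun j t => Real.exp ((b * a j) * t))]
  have hμlinpi : μlin = Measure.pi lam := by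
    refine (Measure.pi_eq (fun s hs => ?_)).symm
    rw [hμlin]
    rw [withDensity_apply _ (MeasurableSet.univ_pi hs)]
    rw [← lintegral_indicator (MeasurableSet.univ_pi hs) _]
    have hfact : ∀ η : Fin m → ℝ,
        (Set.pi Set.univ s).indicator
          (fun η => ENNReal.ofReal (Real.exp (b * ∑ j, η j * a j) / Zlin)) η
        = ∏ j, (s j).indicator
            (fun t => ENNReal.ofReal (Real.exp ((b * a j) * t) / cj j)) (η j) := by
      intro η
      by_cases hmem : η ∈ Set.pi Set.univ s
      · rw [Set.indicator_of_mem hmem]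
        rw [Finset.prod_congr rfl (fun j _ =>
          Set.indicator_of_mem (hmem j (Set.mem_univ j)) _)]
        rw [← ENNReal.ofReal_prod_of_nonneg
          (fun j _ => div_nonneg (Real.exp_pos _).le (hcjpos j).le)]
        congr 1
        rw [Finset.prod_div_distrib, ← hexpprod η, ← hZlinprod]
      · rw [Set.indicator_of_notMem hmem]
        symm
        rw [Set.mem_pi] at hmem
        push_neg at hmem
        obtain ⟨j, _, hj⟩ := hmem
        exact Finset.prod_eq_zero (Finset.mem_univ j) (Set.indicator_of_notMem hj _)
    simp_rw [hfact]
    rw [hν, lintegral_pi_prod m (fun _ => cPoisson c r) (fun j => inferInstance)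
      (fun j t => (s j).indicator (fun t => ENNReal.ofReal (Real.exp ((b * a j) * t) / cj j)) t)
      (fun j => (hdenm j).indicator (hs j))]
    refine Finset.prod_congr rfl (fun j _ => ?_)
    rw [lintegral_indicator (hs j) _]
    exact (withDensity_apply _ (hs j)).symm
  -- ==== the density D of μlin over ν ====
  set D : (Fin m → ℝ) → ℝ := fun η => Real.exp (b * ∑ j, η j * a j) / Zlin with hD
  have hDm : Measurable D := ((Real.continuous_exp.comp hLcont).measurable).div_const _
  have hD0 : ∀ η, 0 ≤ D η := fun η => div_nonneg (Real.exp_pos _).le hZlinpos.le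
  have hμlinA : ∀ u : (Fin m → ℝ) → ℝ, ∫ η, u η ∂μlin = ∫ η, D η * u η ∂ν := by
    intro u
    rw [hμlin]
    exact hconvI D hDm hD0 u
  have hDG : ∀ η, D η * Real.exp (-G η) = Real.exp (-W η) / Zlin := by
    intro η
    rw [hD]
    show Real.exp (b * ∑ j, η j * a j) / Zlin * Real.exp (-G η) = _
    rw [div_mul_eq_mul_div, ← Real.exp_add]
    congr 2
    rw [hG]
    show b * ∑ j, η j * a j + -(W η + L η) = -W η
    rw [hL]
    ring
  -- ==== truncated antitone functions and Harris ====
  set KN : ℕ → (Fin m → ℝ) → ℝ := fun N η => min (Real.exp (-G η)) (N : ℝ) with hKN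
  have hKNm : ∀ N, Measurable (KN N) := fun N =>
    ((Real.continuous_exp.comp hGcont.neg).min continuous_const).measurable
  have hKNanti : ∀ N, Antitone (KN N) := fun N η η' hle =>
    min_le_min (Real.exp_le_exp.2 (neg_le_neg (hGmono hle))) le_rfl
  have hKN0 : ∀ N η, 0 ≤ KN N η := fun N η =>
    le_min (Real.exp_pos _).le (Nat.cast_nonneg N)
  have hKNle : ∀ N η, KN N η ≤ Real.exp (-G η) := fun N η => min_le_left _ _
  have harrisN : ∀ N : ℕ, ∫ η, D η * (F η * KN N η) ∂ν
      ≤ (∫ η, F η ∂μlin) * ∫ η, D η * KN N η ∂ν := by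
    intro N
    have h1 := harris m lam hlamprob F (KN N) (max M N) hFm (hKNm N)
      (fun x => le_trans (hFb x) (le_max_left _ _))
      (fun x => by
        rw [abs_of_nonneg (hKN0 N x)]
        exact le_trans (min_le_right _ _) (le_max_right _ _))
      hFmono (hKNanti N)
    rw [← hμlinpi] at h1
    calc ∫ η, D η * (F η * KN N η) ∂ν = ∫ η, F η * KN N η ∂μlin :=
          (hμlinA (fun η => F η * KN N η)).symm
      _ ≤ (∫ η, F η ∂μlin) * ∫ η, KN N η ∂μlin := h1
      _ = (∫ η, F η ∂μlin) * ∫ η, D η * KN N η ∂ν := by rw [hμlinA (KN N)]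
  -- ==== dominated convergence ====
  have hKNtend : ∀ η, Filter.Tendsto (fun N : ℕ => KN N η) Filter.atTop
      (nhds (Real.exp (-G η))) := by
    intro η
    refine tendsto_atTop_of_eventually_const (i₀ := ⌈Real.exp (-G η)⌉₊) (fun N hN => ?_)
    exact min_eq_left (le_trans (Nat.le_ceil _) (Nat.cast_le.2 hN))
  have hdomint : Integrable (fun η => D η * (M * Real.exp (-G η))) ν := by
    have heq : (fun η => D η * (M * Real.exp (-G η)))
        = fun η => M * (Real.exp (-W η) / Zlin) := by
      funext η
      rw [show D η * (M * Real.exp (-G η)) = M * (D η * Real.exp (-G η)) from by ring, hDG η]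
    rw [heq]
    exact (hWint.div_const _).const_mul M
  have hdomint1 : Integrable (fun η => D η * Real.exp (-G η)) ν := by
    have heq : (fun η => D η * Real.exp (-G η)) = fun η => Real.exp (-W η) / Zlin :=
      funext (fun η => hDG η)
    rw [heq]
    exact hWint.div_const _
  have hGm : Measurable G := hGcont.measurable
  have hSlim : Filter.Tendsto (fun N : ℕ => ∫ η, D η * (F η * KN N η) ∂ν) Filter.atTop
      (nhds (∫ η, D η * (F η * Real.exp (-G η)) ∂ν)) := by
    refine tendsto_integral_of_dominated_convergence
      (fun η => D η * (M * Real.exp (-G η)))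
      (fun N => (hDm.mul (hFm.mul (hKNm N))).aestronglyMeasurable)
      hdomint
      (fun N => Filter.Eventually.of_forall (fun η => ?_))
      (Filter.Eventually.of_forall (fun η => ?_))
    · rw [Real.norm_eq_abs, abs_mul, abs_of_nonneg (hD0 η)]
      refine mul_le_mul_of_nonneg_left ?_ (hD0 η)
      rw [abs_mul, abs_of_nonneg (hKN0 N η)]
      exact mul_le_mul (hFb η) (hKNle N η) (hKN0 N η) hM
    · exact ((hKNtend η).const_mul (F η)).const_mul (D η)
  have hTlim : Filter.Tendsto (fun N : ℕ => ∫ η, D η * KN N η ∂ν) Filter.atTop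
      (nhds (∫ η, D η * Real.exp (-G η) ∂ν)) := by
    refine tendsto_integral_of_dominated_convergence
      (fun η => D η * Real.exp (-G η))
      (fun N => (hDm.mul (hKNm N)).aestronglyMeasurable)
      hdomint1
      (fun N => Filter.Eventually.of_forall (fun η => ?_))
      (Filter.Eventually.of_forall (fun η => ?_))
    · rw [Real.norm_eq_abs, abs_mul, abs_of_nonneg (hD0 η), abs_of_nonneg (hKN0 N η)]
      exact mul_le_mul_of_nonneg_left (hKNle N η) (hD0 η)
    · exact (hKNtend η).const_mul (D η)
  have hlimle : ∫ η, D η * (F η * Real.exp (-G η)) ∂ν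
      ≤ (∫ η, F η ∂μlin) * ∫ η, D η * Real.exp (-G η) ∂ν :=
    le_of_tendsto_of_tendsto' hSlim (hTlim.const_mul (∫ η, F η ∂μlin)) harrisN
  -- ==== final computation ====
  set J : ℝ := ∫ η, Real.exp (-W η) * F η ∂ν with hJ
  have hPval : ∫ η, D η * (F η * Real.exp (-G η)) ∂ν = J / Zlin := by
    have heq : ∀ η, D η * (F η * Real.exp (-G η)) = (Real.exp (-W η) * F η) / Zlin := by
      intro η
      rw [show D η * (F η * Real.exp (-G η)) = (D η * Real.exp (-G η)) * F η from by ring,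
        hDG η]
      ring
    simp_rw [heq]
    rw [integral_div]
  have hQval : ∫ η, D η * Real.exp (-G η) ∂ν = Z / Zlin := by
    simp_rw [hDG]
    rw [integral_div, ← hZ]
  have hμval : ∫ η, F η ∂μ = J / Z := by
    rw [hμ, hconvI (fun η => Real.exp (-W η) / Z) (hWcont.neg.measurable.exp.div_const _)
      (fun η => div_nonneg (Real.exp_pos _).le hZpos.le) F]
    have heq : ∀ η, (Real.exp (-W η) / Z) * F η = (Real.exp (-W η) * F η) / Z := by
      intro η; ring
    simp_rw [heq]
    rw [integral_div]
  rw [hμval]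
  rw [hPval, hQval] at hlimle
  set R : ℝ := ∫ η, F η ∂μlin
  rw [div_le_iff₀ hZpos]
  have h2 : J / Zlin ≤ (R * Z) / Zlin := by
    calc J / Zlin ≤ R * (Z / Zlin) := hlimle
      _ = (R * Z) / Zlin := by ring
  have h3 := mul_le_mul_of_nonneg_right h2 hZlinpos.le
  rwa [div_mul_cancel₀ _ hZlinpos.ne', div_mul_cancel₀ _ hZlinpos.ne'] at h3
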